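/- For any prime ℓ and positive integer s, the formal power series F(q)^{ℓ^{s−1}} ≡ 1 (mod ℓ^s), where F(q) = ∏_{n≥1} (1 − q^n)^{ℓ^2} / (1 − q^{ℓ^2 n}). -/

import Mathlib

open PowerSeries

private lemma prod_sub_prod_dvd' {R ι : Type*} [CommRing R] (s : Finset ι) (f g : ι → R)
    (c : R) (h : ∀ i ∈ s, c ∣ f i - g i) :
    c ∣ (∏ i ∈ s, f i) - ∏ i ∈ s, g i := by
  induction s using Finset.cons_induction with
  | empty => simp
  | cons a s ha ih =>
      rw [Finset.prod_cons, Finset.prod_cons]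
      have : f a * ∏ i ∈ s, f i - g a * ∏ i ∈ s, g i
          = (f a - g a) * ∏ i ∈ s, f i + g a * ((∏ i ∈ s, f i) - ∏ i ∈ s, g i) := by ring
      rw [this]
      exact dvd_add (Dvd.dvd.mul_right (h a (Finset.mem_cons_self a s)) _)
        (Dvd.dvd.mul_left (ih fun i hi => h i (Finset.mem_cons_of_mem hi)) _)

private lemma factor_dvd (ℓ : ℕ) (hℓ : ℓ.Prime) (m : ℕ) :
    ((ℓ : PowerSeries ℤ)) ∣
      (1 - (PowerSeries.X : PowerSeries ℤ) ^ m) ^ (ℓ ^ 2)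
        - (1 - (PowerSeries.X : PowerSeries ℤ) ^ (ℓ ^ 2 * m)) := by
  obtain ⟨r, hr⟩ := exists_add_pow_prime_pow_eq hℓ (1 : PowerSeries ℤ) (-(X ^ m)) 2
  have h1 : (1 - (PowerSeries.X : PowerSeries ℤ) ^ m) = 1 + -(X ^ m) := by ring
  have hneg : (-(X ^ m) : PowerSeries ℤ) ^ (ℓ ^ 2)
      = (-1) ^ (ℓ ^ 2) * X ^ (ℓ ^ 2 * m) := by
    rw [neg_pow, ← pow_mul, mul_comm m]
  obtain ⟨c, hc⟩ : ((ℓ : ℤ)) ∣ ((-1 : ℤ) ^ (ℓ ^ 2) + 1) := by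
    rcases hℓ.eq_two_or_odd' with h | h
    · subst h; decide
    · rw [Odd.neg_one_pow (h.pow)]; simp
  have hC : ((-1 : PowerSeries ℤ) ^ (ℓ ^ 2) + 1)
      = (ℓ : PowerSeries ℤ) * PowerSeries.C c := by
    have := congrArg (fun x : ℤ => PowerSeries.C x) hc
    simpa [map_mul, map_pow] using this
  refine ⟨1 * -(X ^ m) * r + PowerSeries.C c * X ^ (ℓ ^ 2 * m), ?_⟩
  rw [h1, hr, hneg]
  have key : (1 : PowerSeries ℤ) ^ ℓ ^ 2 + (-1) ^ ℓ ^ 2 * X ^ (ℓ ^ 2 * m)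
        + (ℓ : PowerSeries ℤ) * 1 * -(X ^ m) * r - (1 - X ^ (ℓ ^ 2 * m))
      = ((-1) ^ ℓ ^ 2 + 1) * X ^ (ℓ ^ 2 * m) + (ℓ : PowerSeries ℤ) * (1 * -(X ^ m) * r) := by ring
  rw [key, hC]; ring

open PowerSeries in
/-- `F^{ℓ^{s-1}} ≡ 1 (mod ℓ^s)` for `F = ∏ (1-qⁿ)^{ℓ²}/(1-q^{ℓ²n})`, stated
equivalently as `∏ (1-qⁿ)^{ℓ²·ℓ^{s-1}} ≡ ∏ (1-q^{ℓ²n})^{ℓ^{s-1}} (mod ℓ^s)`,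
coefficientwise with products truncated at `N`. -/
theorem stmt15 (ℓ : ℕ) (hℓ : ℓ.Prime) (s : ℕ) (hs : 1 ≤ s) (N : ℕ) :
    ((ℓ : ℤ) ^ s) ∣ (PowerSeries.coeff N)
      ((∏ m ∈ Finset.Icc 1 N,
          (1 - (PowerSeries.X : PowerSeries ℤ) ^ m) ^ (ℓ ^ 2 * ℓ ^ (s - 1))) -
        ∏ m ∈ Finset.Icc 1 N,
          (1 - (PowerSeries.X : PowerSeries ℤ) ^ (ℓ ^ 2 * m)) ^ (ℓ ^ (s - 1))) := by
  set A : PowerSeries ℤ := ∏ m ∈ Finset.Icc 1 N, (1 - (X : PowerSeries ℤ) ^ m) ^ (ℓ ^ 2)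
  set B : PowerSeries ℤ := ∏ m ∈ Finset.Icc 1 N, (1 - (X : PowerSeries ℤ) ^ (ℓ ^ 2 * m))
  have hAB : ((ℓ : PowerSeries ℤ)) ∣ A - B :=
    prod_sub_prod_dvd' _ _ _ _ fun m _ => factor_dvd ℓ hℓ m
  have hpow : ((ℓ : PowerSeries ℤ) ^ ((s - 1) + 1)) ∣
      A ^ ℓ ^ (s - 1) - B ^ ℓ ^ (s - 1) := by
    have := dvd_sub_pow_of_dvd_sub hAB (s - 1)
    simpa using this
  rw [Nat.sub_add_cancel hs] at hpow
  have hA : A ^ ℓ ^ (s - 1)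
      = ∏ m ∈ Finset.Icc 1 N, (1 - (X : PowerSeries ℤ) ^ m) ^ (ℓ ^ 2 * ℓ ^ (s - 1)) := by
    rw [← Finset.prod_pow]
    exact Finset.prod_congr rfl fun m _ => by rw [← pow_mul]
  have hB : B ^ ℓ ^ (s - 1)
      = ∏ m ∈ Finset.Icc 1 N, (1 - (X : PowerSeries ℤ) ^ (ℓ ^ 2 * m)) ^ (ℓ ^ (s - 1)) := by
    rw [← Finset.prod_pow]
  rw [← hA, ← hB]
  obtain ⟨g, hg⟩ := hpow
  have hcast : ((ℓ : PowerSeries ℤ) ^ s) = PowerSeries.C ((ℓ : ℤ) ^ s) := by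
    rw [map_pow, map_natCast]
  rw [hg, hcast, PowerSeries.coeff_C_mul]
  exact Dvd.intro _ rfl
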